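/- Let V be a real vector space and φ : V → V a linear endomorphism satisfying φ² = pφ + qI for real numbers p, q with p² + 4q > 0. Then F := (2/(2σ − p))φ − (p/(2σ − p))I, where σ = (p + √(p² + 4q))/2, satisfies F² = I. -/
import Mathlib


theorem metallic_to_almost_product
    (V : Type*) [AddCommGroup V] [Module ℝ V]
    (p q : ℝ) (hpq : p^2 + 4 * q > 0)
    (φ : V →ₗ[ℝ] V)
    (hφ : φ ∘ₗ φ = p • φ + q • LinearMap.id)
    (σ : ℝ) (hσ : σ = (p + Real.sqrt (p^2 + 4 * q)) / 2)
    (F : V →ₗ[ℝ] V)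
    (hF : F = (2 / (2 * σ - p)) • φ - (p / (2 * σ - p)) • LinearMap.id) :
    F ∘ₗ F = LinearMap.id := by
  have hs : 2 * σ - p = Real.sqrt (p^2 + 4 * q) := by rw [hσ]; ring
  have hs2 : (2 * σ - p) ^ 2 = p ^ 2 + 4 * q := by
    rw [hs, Real.sq_sqrt hpq.le]
  have hsne : 2 * σ - p ≠ 0 := by
    rw [hs]; exact (Real.sqrt_pos.mpr hpq).ne'
  set s := 2 * σ - p
  ext v
  have hφv : φ (φ v) = p • φ v + q • v := by
    have := congrArg (fun f => f v) hφ
    simpa using this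
  simp only [hF, LinearMap.comp_apply, LinearMap.sub_apply, LinearMap.smul_apply,
    LinearMap.id_coe, id_eq, map_sub, map_smul, hφv, smul_sub, smul_add, smul_smul]
  rw [← sub_eq_zero]
  match_scalars
  · field_simp; ring
  · field_simp
    have hs2' : (2*σ-p)^2 = p^2+4*q := hs2
    linear_combination -hs2'
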